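/- Let X be a complex Hilbert space. Let (A_n) and (P_n) be sequences of bounded linear operators on X and A, P bounded linear operators on X such that: (i) A_n* A_n = A_n A_n* = P_n and P_n² = P_n for all n; (ii) A* A = A A* = P and P² = P; (iii) P_n x → P x in norm for every x ∈ X; and (iv) ⟨A_n x, y⟩ → ⟨A x, y⟩ for all x, y ∈ X. Then for every natural number m and every x ∈ X, A_n^m x → A^m x in norm and (A_n*)^m x → (A*)^m x in norm. -/

import Mathlib

open Filter ContinuousLinearMap

section Aux
variable {X : Type*} [NormedAddCommGroup X] [InnerProductSpace ℂ X] [CompleteSpace X]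

private lemma aux_norm_eq (B Q : X →L[ℂ] X) (hBQ : adjoint B * B = Q) (hQ2 : Q * Q = Q)
    (x : X) : ‖B x‖ = ‖Q x‖ := by
  have hQsa : adjoint Q = Q := by
    rw [← hBQ, ← star_eq_adjoint, star_mul, star_eq_adjoint, star_eq_adjoint, adjoint_adjoint]
  have h1 : (inner ℂ (Q x) x : ℂ) = inner ℂ (B x) (B x) := by
    rw [← hBQ, ContinuousLinearMap.mul_apply, adjoint_inner_left]
  have h2 : (inner ℂ (Q x) x : ℂ) = inner ℂ (Q x) (Q x) := by
    conv_lhs => rw [← hQ2, ContinuousLinearMap.mul_apply]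
    nth_rewrite 1 [← hQsa]
    exact adjoint_inner_left Q x (Q x)
  have hsq : ‖B x‖ ^ 2 = ‖Q x‖ ^ 2 := by
    rw [← inner_self_eq_norm_sq (𝕜 := ℂ), ← inner_self_eq_norm_sq (𝕜 := ℂ), ← h1, h2]
  have := congrArg Real.sqrt hsq
  rwa [Real.sqrt_sq (norm_nonneg _), Real.sqrt_sq (norm_nonneg _)] at this

private lemma aux_proj_contr (Q : X →L[ℂ] X) (hQsa : adjoint Q = Q) (hQ2 : Q * Q = Q)
    (x : X) : ‖Q x‖ ≤ ‖x‖ := by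
  have h2 : (inner ℂ (Q x) x : ℂ) = inner ℂ (Q x) (Q x) := by
    conv_lhs => rw [← hQ2, ContinuousLinearMap.mul_apply]
    nth_rewrite 1 [← hQsa]
    exact adjoint_inner_left Q x (Q x)
  have hle : ‖Q x‖ ^ 2 ≤ ‖Q x‖ * ‖x‖ := by
    rw [← inner_self_eq_norm_sq (𝕜 := ℂ), ← h2]
    exact re_inner_le_norm (𝕜 := ℂ) (Q x) x
  rcases eq_or_lt_of_le (norm_nonneg (Q x)) with h | h
  · rw [← h]; exact norm_nonneg x
  · nlinarith

private lemma aux_strong_of_weak (B : ℕ → X →L[ℂ] X) (B₀ : X →L[ℂ] X)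
    (hnorm : ∀ x, Tendsto (fun n => ‖B n x‖) atTop (nhds ‖B₀ x‖))
    (hweak : ∀ x y : X, Tendsto (fun n => (inner ℂ ((B n) x) y : ℂ)) atTop
      (nhds (inner ℂ (B₀ x) y))) (x : X) :
    Tendsto (fun n => B n x) atTop (nhds (B₀ x)) := by
  have hsq : Tendsto (fun n => ‖B n x - B₀ x‖ ^ 2) atTop (nhds 0) := by
    have h1 : Tendsto (fun n => ‖B n x‖ ^ 2) atTop (nhds (‖B₀ x‖ ^ 2)) :=
      ((hnorm x).pow 2)
    have h2 : Tendsto (fun n => RCLike.re (inner ℂ ((B n) x) (B₀ x) : ℂ)) atTop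
        (nhds (RCLike.re (inner ℂ (B₀ x) (B₀ x) : ℂ))) :=
      (RCLike.continuous_re.tendsto _).comp (hweak x (B₀ x))
    have key : Tendsto (fun n => ‖B n x‖ ^ 2 - 2 * RCLike.re (inner ℂ ((B n) x) (B₀ x) : ℂ)
        + ‖B₀ x‖ ^ 2) atTop
        (nhds (‖B₀ x‖ ^ 2 - 2 * RCLike.re (inner ℂ (B₀ x) (B₀ x) : ℂ) + ‖B₀ x‖ ^ 2)) :=
      (h1.sub (h2.const_mul 2)).add tendsto_const_nhds
    have hzero : ‖B₀ x‖ ^ 2 - 2 * RCLike.re (inner ℂ (B₀ x) (B₀ x) : ℂ) + ‖B₀ x‖ ^ 2 = 0 := by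
      rw [inner_self_eq_norm_sq (𝕜 := ℂ)]; ring
    rw [hzero] at key
    convert key using 2 with n
    exact norm_sub_sq (𝕜 := ℂ) _ _
  rw [tendsto_iff_norm_sub_tendsto_zero]
  have h := (Real.continuous_sqrt.tendsto _).comp hsq
  simp only [Function.comp_def, Real.sqrt_zero] at h
  exact h.congr fun n => Real.sqrt_sq (norm_nonneg _)

private lemma aux_pow_strong (B : ℕ → X →L[ℂ] X) (B₀ : X →L[ℂ] X)
    (hcontr : ∀ n v, ‖B n v‖ ≤ ‖v‖)
    (hstrong : ∀ v, Tendsto (fun n => B n v) atTop (nhds (B₀ v))) :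
    ∀ (m : ℕ) (x : X), Tendsto (fun n => ((B n) ^ m) x) atTop (nhds ((B₀ ^ m) x)) := by
  intro m
  induction m with
  | zero => intro x; simp only [pow_zero, one_apply]; exact tendsto_const_nhds
  | succ k ih =>
    intro x
    simp only [pow_succ', mul_apply]
    rw [tendsto_iff_norm_sub_tendsto_zero]
    have hbd : ∀ n, ‖B n (((B n) ^ k) x) - B₀ ((B₀ ^ k) x)‖ ≤
        ‖((B n) ^ k) x - (B₀ ^ k) x‖ + ‖B n ((B₀ ^ k) x) - B₀ ((B₀ ^ k) x)‖ := by
      intro n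
      calc ‖B n (((B n) ^ k) x) - B₀ ((B₀ ^ k) x)‖
          ≤ ‖B n (((B n) ^ k) x) - B n ((B₀ ^ k) x)‖ + ‖B n ((B₀ ^ k) x) - B₀ ((B₀ ^ k) x)‖ :=
            norm_sub_le_norm_sub_add_norm_sub _ _ _
        _ ≤ ‖((B n) ^ k) x - (B₀ ^ k) x‖ + ‖B n ((B₀ ^ k) x) - B₀ ((B₀ ^ k) x)‖ := by
            gcongr
            rw [← map_sub]
            exact hcontr n _
    have h1 : Tendsto (fun n => ‖((B n) ^ k) x - (B₀ ^ k) x‖) atTop (nhds 0) := by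
      rw [← tendsto_iff_norm_sub_tendsto_zero]; exact ih x
    have h2 : Tendsto (fun n => ‖B n ((B₀ ^ k) x) - B₀ ((B₀ ^ k) x)‖) atTop (nhds 0) := by
      rw [← tendsto_iff_norm_sub_tendsto_zero]; exact hstrong _
    have := h1.add h2
    rw [add_zero] at this
    exact squeeze_zero (fun n => norm_nonneg _) hbd this

end Aux

/-- Suppose `Aₙ* Aₙ = Aₙ Aₙ* = Pₙ` with `Pₙ² = Pₙ`, and similarly for limit operators
`A, P`, that `Pₙ → P` strongly and `Aₙ → A` in the weak operator topology. Then for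
every `m ∈ ℕ`, `Aₙᵐ → Aᵐ` and `(Aₙ*)ᵐ → (A*)ᵐ` strongly. -/
theorem partial_isometry_powers_strong_convergence
    {X : Type*} [NormedAddCommGroup X] [InnerProductSpace ℂ X] [CompleteSpace X]
    (A P : ℕ → (X →L[ℂ] X)) (A₀ P₀ : X →L[ℂ] X)
    (h₁ : ∀ n, adjoint (A n) * A n = P n ∧ A n * adjoint (A n) = P n ∧
      P n * P n = P n)
    (h₂ : adjoint A₀ * A₀ = P₀ ∧ A₀ * adjoint A₀ = P₀ ∧ P₀ * P₀ = P₀)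
    (hPstrong : ∀ x : X, Tendsto (fun n => (P n) x) atTop (nhds (P₀ x)))
    (hAweak : ∀ x y : X, Tendsto (fun n => (inner ℂ ((A n) x) y : ℂ)) atTop
      (nhds (inner ℂ (A₀ x) y))) :
    ∀ (m : ℕ) (x : X),
      Tendsto (fun n => ((A n) ^ m) x) atTop (nhds ((A₀ ^ m) x)) ∧
      Tendsto (fun n => ((adjoint (A n)) ^ m) x) atTop (nhds (((adjoint A₀) ^ m) x)) := by
  obtain ⟨h₂a, h₂b, h₂c⟩ := h₂
  -- norm identities
  have hnA : ∀ n x, ‖A n x‖ = ‖P n x‖ := fun n x =>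
    aux_norm_eq (A n) (P n) (h₁ n).1 (h₁ n).2.2 x
  have hnA' : ∀ n x, ‖adjoint (A n) x‖ = ‖P n x‖ := fun n x =>
    aux_norm_eq (adjoint (A n)) (P n) (by rw [adjoint_adjoint]; exact (h₁ n).2.1) (h₁ n).2.2 x
  have hnA₀ : ∀ x, ‖A₀ x‖ = ‖P₀ x‖ := fun x => aux_norm_eq A₀ P₀ h₂a h₂c x
  have hnA₀' : ∀ x, ‖adjoint A₀ x‖ = ‖P₀ x‖ := fun x =>
    aux_norm_eq (adjoint A₀) P₀ (by rw [adjoint_adjoint]; exact h₂b) h₂c x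
  -- contraction
  have hPsa : ∀ n, adjoint (P n) = P n := by
    intro n
    rw [← (h₁ n).1, ← star_eq_adjoint, star_mul, star_eq_adjoint, star_eq_adjoint,
      adjoint_adjoint]
  have hPcontr : ∀ n v, ‖P n v‖ ≤ ‖v‖ := fun n v =>
    aux_proj_contr (P n) (hPsa n) (h₁ n).2.2 v
  have hAcontr : ∀ n v, ‖A n v‖ ≤ ‖v‖ := fun n v => (hnA n v) ▸ hPcontr n v
  have hA'contr : ∀ n v, ‖adjoint (A n) v‖ ≤ ‖v‖ := fun n v => (hnA' n v) ▸ hPcontr n v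
  -- norm convergence
  have hnormA : ∀ x, Tendsto (fun n => ‖A n x‖) atTop (nhds ‖A₀ x‖) := by
    intro x
    simp only [hnA, hnA₀]
    exact ((continuous_norm.tendsto _).comp (hPstrong x))
  have hnormA' : ∀ x, Tendsto (fun n => ‖adjoint (A n) x‖) atTop (nhds ‖adjoint A₀ x‖) := by
    intro x
    simp only [hnA', hnA₀']
    exact ((continuous_norm.tendsto _).comp (hPstrong x))
  -- weak convergence of adjoints
  have hA'weak : ∀ x y : X, Tendsto (fun n => (inner ℂ ((adjoint (A n)) x) y : ℂ)) atTop
      (nhds (inner ℂ ((adjoint A₀) x) y)) := by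
    intro x y
    have h := (continuous_star.tendsto _).comp (hAweak y x)
    simp only [Function.comp_def, RCLike.star_def, inner_conj_symm] at h
    simpa only [adjoint_inner_left] using h
  -- strong convergence
  have hAstrong : ∀ x, Tendsto (fun n => A n x) atTop (nhds (A₀ x)) :=
    aux_strong_of_weak A A₀ hnormA hAweak
  have hA'strong : ∀ x, Tendsto (fun n => adjoint (A n) x) atTop (nhds (adjoint A₀ x)) :=
    aux_strong_of_weak (fun n => adjoint (A n)) (adjoint A₀) hnormA' hA'weak
  intro m x
  exact ⟨aux_pow_strong A A₀ hAcontr hAstrong m x,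
    aux_pow_strong (fun n => adjoint (A n)) (adjoint A₀) hA'contr hA'strong m x⟩
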